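/- arXiv:1106.1781 — 2 statements merged into one kernel-verified Lean document; each statement's English description precedes it below -/
import Mathlib

section
/- For every ε > 0 there exists a constant c(ε) > 0, independent of N and of the grid function, such that for every integer N ≥ 1 and every periodic grid function z one has max_{1 ≤ i ≤ N} |(D₀z)_i|² ≤ ε ‖D₊³D₋²z‖_h² + c(ε) ‖z‖_h². -/
/-- Forward difference operator `(D₊u)_i = (u_{i+1} − u_i)/h`. -/
noncomputable def Dp (h : ℝ) (u : ℤ → ℝ) : ℤ → ℝ := fun i => (u (i + 1) - u i) / h

/-- Backward difference operator `(D₋u)_i = (u_i − u_{i−1})/h`. -/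
noncomputable def Dm (h : ℝ) (u : ℤ → ℝ) : ℤ → ℝ := fun i => (u i - u (i - 1)) / h

/-- Central difference operator `(D₀u)_i = (u_{i+1} − u_{i−1})/(2h)`. -/
noncomputable def D0 (h : ℝ) (u : ℤ → ℝ) : ℤ → ℝ := fun i => (u (i + 1) - u (i - 1)) / (2 * h)

/-- Discrete inner product `(f,g)_h = h Σ_{i=1}^N f_i g_i`. -/
noncomputable def iph (N : ℕ) (h : ℝ) (f g : ℤ → ℝ) : ℝ :=
  h * ∑ i ∈ Finset.Icc (1 : ℤ) (N : ℤ), f i * g i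

/-- Discrete squared norm `‖f‖_h² = h Σ_{i=1}^N f_i²`. -/
noncomputable def nh2 (N : ℕ) (h : ℝ) (f : ℤ → ℝ) : ℝ :=
  h * ∑ i ∈ Finset.Icc (1 : ℤ) (N : ℤ), (f i) ^ 2

/-- Discrete norm `‖f‖_h`. -/
noncomputable def normh (N : ℕ) (h : ℝ) (f : ℤ → ℝ) : ℝ := Real.sqrt (nh2 N h f)

/-- A periodic grid function with period `N`: `u_{i+N} = u_i` for all `i`. -/
def PeriodicGrid (N : ℕ) (u : ℤ → ℝ) : Prop := ∀ i : ℤ, u (i + N) = u i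

section helpers

lemma sum_shift_one (N : ℕ) (hN : 1 ≤ N) (f : ℤ → ℝ) (hf : PeriodicGrid N f) :
    ∑ i ∈ Finset.Icc (1 : ℤ) (N : ℤ), f (i + 1) = ∑ i ∈ Finset.Icc (1 : ℤ) (N : ℤ), f i := by
  have hN' : (1 : ℤ) ≤ (N : ℤ) := by exact_mod_cast hN
  have e1 : Finset.Icc (1 : ℤ) (N : ℤ) = insert (1 : ℤ) (Finset.Icc 2 (N : ℤ)) := by
    ext x; simp only [Finset.mem_Icc, Finset.mem_insert]; omega
  have e2 : Finset.Icc (2 : ℤ) ((N : ℤ) + 1) = insert ((N : ℤ) + 1) (Finset.Icc 2 (N : ℤ)) := by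
    ext x; simp only [Finset.mem_Icc, Finset.mem_insert]; omega
  have hmap : ∑ i ∈ Finset.Icc (1 : ℤ) (N : ℤ), f (i + 1)
      = ∑ j ∈ Finset.Icc (2 : ℤ) ((N : ℤ) + 1), f j := by
    apply Finset.sum_nbij' (fun i => i + 1) (fun j => j - 1) <;>
      (intros; simp_all [Finset.mem_Icc]; try omega)
  rw [hmap, e2, e1, Finset.sum_insert (by simp), Finset.sum_insert (by simp)]
  have : f ((N : ℤ) + 1) = f 1 := by
    have := hf 1; rwa [add_comm] at this
  rw [this]

lemma periodic_shift (N : ℕ) (f : ℤ → ℝ) (hf : PeriodicGrid N f) (k : ℤ) :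
    PeriodicGrid N (fun i => f (i + k)) := by
  intro i; simp only
  rw [show i + (N : ℤ) + k = (i + k) + (N : ℤ) by ring, hf]

lemma sum_shift (N : ℕ) (hN : 1 ≤ N) (f : ℤ → ℝ) (hf : PeriodicGrid N f) (k : ℤ) :
    ∑ i ∈ Finset.Icc (1 : ℤ) (N : ℤ), f (i + k) = ∑ i ∈ Finset.Icc (1 : ℤ) (N : ℤ), f i := by
  induction k using Int.induction_on with
  | zero => simp
  | succ n ih =>
      have key := sum_shift_one N hN (fun i => f (i + n)) (periodic_shift N f hf n)
      have g1 : ∑ i ∈ Finset.Icc (1 : ℤ) (N : ℤ), f (i + ((n:ℤ) + 1))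
          = ∑ i ∈ Finset.Icc (1 : ℤ) (N : ℤ), f ((i + 1) + (n:ℤ)) :=
        Finset.sum_congr rfl (fun i _ => by congr 1; ring)
      exact g1.trans (key.trans ih)
  | pred n ih =>
      have key := sum_shift_one N hN (fun i => f (i + (-(n:ℤ) - 1))) (periodic_shift N f hf _)
      have g2 : ∑ i ∈ Finset.Icc (1 : ℤ) (N : ℤ), f (i + -(n:ℤ))
          = ∑ i ∈ Finset.Icc (1 : ℤ) (N : ℤ), f (i + (-(n:ℤ) - 1)) :=
        (Finset.sum_congr rfl (fun i _ => by congr 1; ring) :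
          ∑ i ∈ Finset.Icc (1 : ℤ) (N : ℤ), f (i + -(n:ℤ))
            = ∑ i ∈ Finset.Icc (1 : ℤ) (N : ℤ), f ((i + 1) + (-(n:ℤ) - 1))).trans key
      exact g2.symm.trans ih

lemma periodic_Dp (N : ℕ) (h : ℝ) (u : ℤ → ℝ) (hu : PeriodicGrid N u) :
    PeriodicGrid N (Dp h u) := by
  intro i; simp only [Dp]
  rw [show i + (N : ℤ) + 1 = (i + 1) + (N : ℤ) by ring, hu, hu]

lemma periodic_D0 (N : ℕ) (h : ℝ) (u : ℤ → ℝ) (hu : PeriodicGrid N u) :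
    PeriodicGrid N (D0 h u) := by
  intro i; simp only [D0]
  rw [show i + (N : ℤ) + 1 = (i + 1) + (N : ℤ) by ring,
    show i + (N : ℤ) - 1 = (i - 1) + (N : ℤ) by ring, hu, hu]

lemma nh2_nonneg (N : ℕ) (h : ℝ) (hh : 0 ≤ h) (f : ℤ → ℝ) : 0 ≤ nh2 N h f :=
  mul_nonneg hh (Finset.sum_nonneg fun _ _ => sq_nonneg _)

lemma Dm_eq_shift (h : ℝ) (u : ℤ → ℝ) : Dm h u = fun i => Dp h u (i - 1) := by
  funext i; simp only [Dm, Dp]; rw [show i - 1 + 1 = i by ring]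

lemma Dp_shift (h : ℝ) (u : ℤ → ℝ) (c : ℤ) :
    Dp h (fun i => u (i + c)) = fun i => Dp h u (i + c) := by
  funext i; simp only [Dp]; rw [show i + 1 + c = i + c + 1 by ring]

lemma nh2_shift (N : ℕ) (hN : 1 ≤ N) (h : ℝ) (f : ℤ → ℝ) (hf : PeriodicGrid N f) (k : ℤ) :
    nh2 N h (fun i => f (i + k)) = nh2 N h f := by
  unfold nh2
  congr 1
  exact sum_shift N hN (fun i => (f i) ^ 2) (fun i => by simp only []; rw [hf]) k

end helpers

lemma cs_step (N : ℕ) (hN : 1 ≤ N) (h : ℝ) (hh : 0 < h) (u : ℤ → ℝ)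
    (hu : PeriodicGrid N u) :
    (nh2 N h (Dp h u)) ^ 2 ≤ nh2 N h u * nh2 N h (Dp h (Dp h u)) := by
  have hne : h ≠ 0 := ne_of_gt hh
  set S := Finset.Icc (1 : ℤ) (N : ℤ) with hS
  set g : ℤ → ℝ := fun i => Dp h (Dp h u) (i - 1) with hg
  have hDpu := periodic_Dp N h u hu
  -- summation by parts
  have shift : ∑ i ∈ S, u (i + 1) * Dp h u i
      = ∑ i ∈ S, u i * Dp h u i - ∑ i ∈ S, u i * g i * h := by
    have hF : PeriodicGrid N (fun i => u (i + 1) * Dp h u i) := by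
      intro i; simp only
      rw [show i + (N:ℤ) + 1 = (i + 1) + (N:ℤ) by ring, hu, hDpu]
    have hs := sum_shift N hN (fun i => u (i + 1) * Dp h u i) hF (-1)
    have e : ∀ i : ℤ, u ((i + -1) + 1) * Dp h u (i + -1) = u i * Dp h u (i - 1) := by
      intro i; rw [show (i + -1) + 1 = i by ring, show i + -1 = i - 1 by ring]
    rw [Finset.sum_congr rfl (fun i _ => e i)] at hs
    rw [← hs, ← Finset.sum_sub_distrib]
    apply Finset.sum_congr rfl
    intro i _
    have hgh : g i * h = Dp h u i - Dp h u (i - 1) := by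
      simp only [hg, Dp]
      rw [show i - 1 + 1 = i by ring]
      field_simp
    have : Dp h u (i - 1) = Dp h u i - g i * h := by rw [hgh]; ring
    rw [this]; ring
  have key : ∑ i ∈ S, (Dp h u i) ^ 2 = -∑ i ∈ S, u i * g i := by
    have e1 : ∀ i, (Dp h u i) ^ 2 = (u (i + 1) * Dp h u i - u i * Dp h u i) / h := by
      intro i
      have : Dp h u i = (u (i + 1) - u i) / h := rfl
      rw [sq, this]; field_simp
    rw [Finset.sum_congr rfl (fun i _ => e1 i), ← Finset.sum_div, Finset.sum_sub_distrib, shift,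
      ← Finset.sum_mul]
    field_simp
    ring
  -- Cauchy-Schwarz
  have cs := Finset.sum_mul_sq_le_sq_mul_sq S u g
  have hnh : nh2 N h (Dp h u) = h * (-∑ i ∈ S, u i * g i) := by
    unfold nh2; rw [key]
  have hg2 : ∑ i ∈ S, (g i) ^ 2 = ∑ i ∈ S, (Dp h (Dp h u) i) ^ 2 := by
    have := sum_shift N hN (fun i => (Dp h (Dp h u) i) ^ 2)
      (fun i => by simp only []; rw [periodic_Dp N h _ hDpu]) (-1)
    have e : ∀ i : ℤ, (Dp h (Dp h u) (i + -1)) ^ 2 = (g i) ^ 2 := by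
      intro i; simp only [hg]; rw [show i + -1 = i - 1 by ring]
    rw [Finset.sum_congr rfl (fun i _ => e i)] at this
    exact this
  calc (nh2 N h (Dp h u)) ^ 2 = h ^ 2 * (∑ i ∈ S, u i * g i) ^ 2 := by
        rw [hnh]; ring
    _ ≤ h ^ 2 * ((∑ i ∈ S, (u i) ^ 2) * ∑ i ∈ S, (g i) ^ 2) := by
        apply mul_le_mul_of_nonneg_left cs (sq_nonneg h)
    _ = nh2 N h u * nh2 N h (Dp h (Dp h u)) := by
        unfold nh2; rw [hg2]; ring

lemma tele_nat (F : ℤ → ℝ) (a : ℤ) : ∀ n : ℕ,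
    ∑ k ∈ Finset.Icc a (a + n - 1), (F (k + 1) - F k) = F (a + n) - F a := by
  intro n
  induction n with
  | zero => rw [Finset.Icc_eq_empty (by omega), Finset.sum_empty]; simp
  | succ n ih =>
      have e : Finset.Icc a (a + ((n : ℤ) + 1) - 1) = insert (a + n) (Finset.Icc a (a + n - 1)) := by
        ext x; simp only [Finset.mem_Icc, Finset.mem_insert]; omega
      push_cast
      rw [e, Finset.sum_insert (by simp only [Finset.mem_Icc]; omega), ih]
      rw [show a + ((n : ℤ) + 1) = (a + n) + 1 by ring]
      ring

lemma tele (F : ℤ → ℝ) (a b : ℤ) (hab : a ≤ b) :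
    ∑ k ∈ Finset.Icc a (b - 1), (F (k + 1) - F k) = F b - F a := by
  obtain ⟨n, rfl⟩ : ∃ n : ℕ, b = a + n := ⟨(b - a).toNat, by omega⟩
  have := tele_nat F a n
  rwa [show a + (n : ℤ) - 1 = a + n - 1 by ring] at this

lemma agmon (N : ℕ) (hN : 1 ≤ N) (h : ℝ) (hh : 0 < h) (hNh : (N : ℝ) * h = 1)
    (w : ℤ → ℝ) (hw : PeriodicGrid N w) (i : ℤ) (hi : i ∈ Finset.Icc (1 : ℤ) (N : ℤ)) :
    (w i) ^ 2 ≤ 3 * nh2 N h w + nh2 N h (Dp h w) := by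
  have hne : h ≠ 0 := ne_of_gt hh
  set S := Finset.Icc (1 : ℤ) (N : ℤ) with hS
  set T : ℝ := ∑ k ∈ S, |w (k + 1) ^ 2 - w k ^ 2| with hT
  rw [Finset.mem_Icc] at hi
  -- Step A
  have stepA : ∀ j ∈ S, w i ^ 2 ≤ w j ^ 2 + T := by
    intro j hj
    rw [hS, Finset.mem_Icc] at hj
    have habs : ∀ a b : ℤ, 1 ≤ a → a ≤ b → b ≤ (N : ℤ) →
        |w b ^ 2 - w a ^ 2| ≤ T := by
      intro a b ha hab hbN
      rw [← tele (fun k => w k ^ 2) a b hab]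
      calc |∑ k ∈ Finset.Icc a (b - 1), (w (k + 1) ^ 2 - w k ^ 2)|
          ≤ ∑ k ∈ Finset.Icc a (b - 1), |w (k + 1) ^ 2 - w k ^ 2| :=
            Finset.abs_sum_le_sum_abs _ _
        _ ≤ T := by
            apply Finset.sum_le_sum_of_subset_of_nonneg
            · apply Finset.Icc_subset_Icc <;> omega
            · intros; positivity
    rcases le_total j i with hji | hij
    · have := habs j i hj.1 hji hi.2
      have h2 := le_of_abs_le this
      linarith
    · have := habs i j hi.1 hij hj.2
      have h2 := neg_le_of_abs_le this
      linarith
  -- Step B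
  have cardS : (S.card : ℝ) = (N : ℝ) := by
    rw [hS, Int.card_Icc]
    simp
  have stepB : (N : ℝ) * w i ^ 2 ≤ (∑ j ∈ S, w j ^ 2) + (N : ℝ) * T := by
    have : (N : ℝ) * w i ^ 2 = ∑ _j ∈ S, w i ^ 2 := by
      rw [Finset.sum_const, nsmul_eq_mul, ← cardS]
    rw [this]
    calc ∑ j ∈ S, w i ^ 2 ≤ ∑ j ∈ S, (w j ^ 2 + T) := Finset.sum_le_sum stepA
      _ = (∑ j ∈ S, w j ^ 2) + (N : ℝ) * T := by
          rw [Finset.sum_add_distrib, Finset.sum_const, nsmul_eq_mul, cardS]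
  have stepB' : w i ^ 2 ≤ nh2 N h w + T := by
    have hm := mul_le_mul_of_nonneg_right stepB (le_of_lt hh)
    have e : (N : ℝ) * w i ^ 2 * h = w i ^ 2 := by
      rw [show (N : ℝ) * w i ^ 2 * h = ((N : ℝ) * h) * w i ^ 2 by ring, hNh, one_mul]
    have e2 : ((∑ j ∈ S, w j ^ 2) + (N : ℝ) * T) * h
        = h * (∑ j ∈ S, w j ^ 2) + T := by
      rw [show ((∑ j ∈ S, w j ^ 2) + (N : ℝ) * T) * h
        = h * (∑ j ∈ S, w j ^ 2) + ((N : ℝ) * h) * T by ring, hNh, one_mul]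
    unfold nh2
    rw [e, e2] at hm
    exact hm
  -- Step C
  have pc : ∀ k : ℤ, |w (k + 1) ^ 2 - w k ^ 2|
      ≤ (w (k + 1) - w k) ^ 2 / (2 * h) + h * (w (k + 1) + w k) ^ 2 / 2 := by
    intro k
    have e : w (k + 1) ^ 2 - w k ^ 2 = (w (k + 1) - w k) * (w (k + 1) + w k) := by ring
    rw [e, abs_mul]
    set a := w (k + 1) - w k
    set b := w (k + 1) + w k
    have h1 : |a| ^ 2 = a ^ 2 := sq_abs a
    have h2 : |b| ^ 2 = b ^ 2 := sq_abs b
    have h3 : (0:ℝ) ≤ (|a| - h * |b|) ^ 2 := sq_nonneg _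
    have h4 : (h * |b|) ^ 2 = h ^ 2 * b ^ 2 := by rw [mul_pow, h2]
    rw [div_add_div _ _ (by positivity) (by norm_num : (2:ℝ) ≠ 0), le_div_iff₀ (by positivity)]
    nlinarith [h3, h1, h4, abs_nonneg a, abs_nonneg b]
  have stepC : T ≤ 2 * nh2 N h w + nh2 N h (Dp h w) / 2 := by
    have sumpc : T ≤ (∑ k ∈ S, (w (k + 1) - w k) ^ 2) / (2 * h)
        + h * (∑ k ∈ S, (w (k + 1) + w k) ^ 2) / 2 := by
      rw [hT]
      calc ∑ k ∈ S, |w (k + 1) ^ 2 - w k ^ 2|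
          ≤ ∑ k ∈ S, ((w (k + 1) - w k) ^ 2 / (2 * h) + h * (w (k + 1) + w k) ^ 2 / 2) :=
            Finset.sum_le_sum fun k _ => pc k
        _ = _ := by
              rw [Finset.sum_add_distrib, ← Finset.sum_div, ← Finset.sum_div, ← Finset.mul_sum]
    have e1 : ∑ k ∈ S, (w (k + 1) - w k) ^ 2 = h ^ 2 * ∑ k ∈ S, (Dp h w k) ^ 2 := by
      rw [Finset.mul_sum]
      apply Finset.sum_congr rfl
      intro k _
      have : Dp h w k = (w (k + 1) - w k) / h := rfl
      rw [this]; field_simp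
    have e2 : ∑ k ∈ S, (w (k + 1) + w k) ^ 2 ≤ 4 * ∑ k ∈ S, w k ^ 2 := by
      have shiftw : ∑ k ∈ S, w (k + 1) ^ 2 = ∑ k ∈ S, w k ^ 2 :=
        sum_shift_one N hN (fun k => w k ^ 2) (fun k => by simp only []; rw [hw])
      calc ∑ k ∈ S, (w (k + 1) + w k) ^ 2
          ≤ ∑ k ∈ S, (2 * w (k + 1) ^ 2 + 2 * w k ^ 2) :=
            Finset.sum_le_sum fun k _ => by nlinarith [sq_nonneg (w (k+1) - w k)]
        _ = 4 * ∑ k ∈ S, w k ^ 2 := by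
            rw [Finset.sum_add_distrib, ← Finset.mul_sum, ← Finset.mul_sum, shiftw]; ring
    have hnw : nh2 N h w = h * ∑ k ∈ S, w k ^ 2 := rfl
    have hnd : nh2 N h (Dp h w) = h * ∑ k ∈ S, (Dp h w k) ^ 2 := rfl
    rw [hnw, hnd]
    rw [e1] at sumpc
    have : h ^ 2 * (∑ k ∈ S, (Dp h w k) ^ 2) / (2 * h) = h * (∑ k ∈ S, (Dp h w k) ^ 2) / 2 := by
      field_simp
    rw [this] at sumpc
    have e2' := mul_le_mul_of_nonneg_left e2 hh.le
    nlinarith [sumpc, e2']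
  have hd : 0 ≤ nh2 N h (Dp h w) := nh2_nonneg N h hh.le _
  linarith [stepB', stepC, hd]

lemma young41 (v w : ℝ) (hv : 0 ≤ v) (hw : 0 ≤ w) :
    v ^ 4 * w ≤ ((4 * v + w) / 5) ^ 5 := by
  nlinarith [mul_nonneg (sq_nonneg ((w - v) / 5))
    (show (0:ℝ) ≤ 1024 * v ^ 3 + 203 * v ^ 2 * w + 22 * v * w ^ 2 + w ^ 3 by positivity)]

lemma young32 (v w : ℝ) (hv : 0 ≤ v) (hw : 0 ≤ w) :
    v ^ 3 * w ^ 2 ≤ ((3 * v + 2 * w) / 5) ^ 5 := by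
  nlinarith [mul_nonneg (sq_nonneg ((2 * w - 2 * v) / 5))
    (show (0:ℝ) ≤ 243 * v ^ 3 + 1296 * v ^ 2 * w + 304 * v * w ^ 2 + 32 * w ^ 3 by positivity)]

lemma pow5_le (x y : ℝ) (hx : 0 ≤ x) (hy : 0 ≤ y) (hxy : x ^ 5 ≤ y ^ 5) : x ≤ y :=
  (pow_le_pow_iff_left₀ hx hy (by norm_num)).mp hxy

lemma chain_pow (B0 B1 B2 B3 B4 B5 : ℝ)
    (h0 : 0 ≤ B0) (h1 : 0 ≤ B1) (h2 : 0 ≤ B2) (h3 : 0 ≤ B3) (h4 : 0 ≤ B4) (h5 : 0 ≤ B5)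
    (hc1 : B1 ^ 2 ≤ B0 * B2) (hc2 : B2 ^ 2 ≤ B1 * B3)
    (hc3 : B3 ^ 2 ≤ B2 * B4) (hc4 : B4 ^ 2 ≤ B3 * B5) :
    B1 ^ 5 ≤ B0 ^ 4 * B5 ∧ B2 ^ 5 ≤ B0 ^ 3 * B5 ^ 2 := by
  have h34 : B3 ^ 3 ≤ B2 ^ 2 * B5 := by
    rcases eq_or_lt_of_le h3 with e | hp
    · rw [← e]; simpa using mul_nonneg (sq_nonneg B2) h5
    · have q1 : B3 ^ 4 ≤ B2 ^ 2 * B4 ^ 2 := by nlinarith [hc3, mul_nonneg h2 h4, sq_nonneg B3]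
      have q2 : B2 ^ 2 * B4 ^ 2 ≤ B2 ^ 2 * (B3 * B5) :=
        mul_le_mul_of_nonneg_left hc4 (sq_nonneg B2)
      have key : B3 ^ 3 * B3 ≤ (B2 ^ 2 * B5) * B3 := by nlinarith [q1, q2]
      exact le_of_mul_le_mul_right key hp
  have h24 : B2 ^ 4 ≤ B1 ^ 3 * B5 := by
    rcases eq_or_lt_of_le h2 with e | hp
    · rw [← e]; simpa using mul_nonneg (pow_nonneg h1 3) h5
    · have q1 : (B2 ^ 2) ^ 3 ≤ (B1 * B3) ^ 3 := pow_le_pow_left₀ (sq_nonneg B2) hc2 3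
      have q2 : B1 ^ 3 * B3 ^ 3 ≤ B1 ^ 3 * (B2 ^ 2 * B5) :=
        mul_le_mul_of_nonneg_left h34 (by positivity)
      have key : B2 ^ 4 * B2 ^ 2 ≤ (B1 ^ 3 * B5) * B2 ^ 2 := by nlinarith [q1, q2]
      exact le_of_mul_le_mul_right key (by positivity)
  have h15 : B1 ^ 5 ≤ B0 ^ 4 * B5 := by
    rcases eq_or_lt_of_le h1 with e | hp
    · rw [← e]; simpa using mul_nonneg (pow_nonneg h0 4) h5
    · have q1 : (B1 ^ 2) ^ 4 ≤ (B0 * B2) ^ 4 := pow_le_pow_left₀ (sq_nonneg B1) hc1 4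
      have q2 : B0 ^ 4 * B2 ^ 4 ≤ B0 ^ 4 * (B1 ^ 3 * B5) :=
        mul_le_mul_of_nonneg_left h24 (by positivity)
      have key : B1 ^ 5 * B1 ^ 3 ≤ (B0 ^ 4 * B5) * B1 ^ 3 := by nlinarith [q1, q2]
      exact le_of_mul_le_mul_right key (by positivity)
  have h25 : B2 ^ 5 ≤ B0 ^ 3 * B5 ^ 2 := by
    rcases eq_or_lt_of_le h2 with e | hp
    · rw [← e]; simpa using mul_nonneg (pow_nonneg h0 3) (sq_nonneg B5)
    · have q1 : (B2 ^ 4) ^ 2 ≤ (B1 ^ 3 * B5) ^ 2 :=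
        pow_le_pow_left₀ (by positivity) h24 2
      have q2 : (B1 ^ 2) ^ 3 ≤ (B0 * B2) ^ 3 := pow_le_pow_left₀ (sq_nonneg B1) hc1 3
      have q2' : B1 ^ 6 ≤ B0 ^ 3 * B2 ^ 3 := by nlinarith [q2]
      have q3 : B1 ^ 6 * B5 ^ 2 ≤ (B0 ^ 3 * B2 ^ 3) * B5 ^ 2 :=
        mul_le_mul_of_nonneg_right q2' (sq_nonneg B5)
      have q1' : B2 ^ 8 ≤ B1 ^ 6 * B5 ^ 2 := by nlinarith [q1]
      have key : B2 ^ 5 * B2 ^ 3 ≤ (B0 ^ 3 * B5 ^ 2) * B2 ^ 3 := by nlinarith [q1', q3]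
      exact le_of_mul_le_mul_right key (by positivity)
  exact ⟨h15, h25⟩

lemma arith (ε : ℝ) (hε : 0 < ε) : ∃ c > 0, ∀ B0 B1 B2 B3 B4 B5 : ℝ,
    0 ≤ B0 → 0 ≤ B1 → 0 ≤ B2 → 0 ≤ B3 → 0 ≤ B4 → 0 ≤ B5 →
    B1 ^ 2 ≤ B0 * B2 → B2 ^ 2 ≤ B1 * B3 → B3 ^ 2 ≤ B2 * B4 → B4 ^ 2 ≤ B3 * B5 →
    3 * B1 + B2 ≤ ε * B5 + c * B0 := by
  obtain ⟨μ, hμdef⟩ : ∃ μ : ℝ, μ = 5 * ε / 6 := ⟨_, rfl⟩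
  obtain ⟨μ', hμ'def⟩ : ∃ μ' : ℝ, μ' = 5 * ε / 4 := ⟨_, rfl⟩
  have hμ : 0 < μ := by rw [hμdef]; positivity
  have hμ' : 0 < μ' := by rw [hμ'def]; positivity
  obtain ⟨lam, hlamdef⟩ : ∃ l : ℝ, l = 1 + 1 / μ := ⟨_, rfl⟩
  obtain ⟨lam', hlam'def⟩ : ∃ l : ℝ, l = 1 + 1 / μ' ^ 2 := ⟨_, rfl⟩
  have hlam1 : 1 ≤ lam := by
    rw [hlamdef]; nlinarith [one_div_pos.mpr hμ]
  have hlam'1 : 1 ≤ lam' := by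
    rw [hlam'def]
    have : 0 < 1 / μ' ^ 2 := by positivity
    linarith
  have hlam : 0 < lam := lt_of_lt_of_le one_pos hlam1
  have hlam' : 0 < lam' := lt_of_lt_of_le one_pos hlam'1
  have hlm : 1 ≤ lam ^ 4 * μ := by
    have h2 : lam ≤ lam ^ 4 := le_self_pow₀ hlam1 (by norm_num)
    have h3 : lam * μ = μ + 1 := by rw [hlamdef]; field_simp
    nlinarith [mul_le_mul_of_nonneg_right h2 hμ.le]
  have hlm' : 1 ≤ lam' ^ 3 * μ' ^ 2 := by
    have h2 : lam' ≤ lam' ^ 3 := le_self_pow₀ hlam'1 (by norm_num)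
    have h3 : lam' * μ' ^ 2 = μ' ^ 2 + 1 := by rw [hlam'def]; field_simp
    nlinarith [mul_le_mul_of_nonneg_right h2 (sq_nonneg μ')]
  refine ⟨(12 * lam + 3 * lam') / 5, by linarith, ?_⟩
  intro B0 B1 B2 B3 B4 B5 h0 h1 h2 h3 h4 h5 hc1 hc2 hc3 hc4
  obtain ⟨h15, h25⟩ := chain_pow B0 B1 B2 B3 B4 B5 h0 h1 h2 h3 h4 h5 hc1 hc2 hc3 hc4
  have key1 : B1 ≤ (4 * (lam * B0) + μ * B5) / 5 := by
    apply pow5_le _ _ h1 (by positivity)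
    calc B1 ^ 5 ≤ B0 ^ 4 * B5 := h15
      _ ≤ (lam ^ 4 * μ) * (B0 ^ 4 * B5) := by
          nlinarith [hlm, mul_nonneg (pow_nonneg h0 4) h5]
      _ = (lam * B0) ^ 4 * (μ * B5) := by ring
      _ ≤ ((4 * (lam * B0) + μ * B5) / 5) ^ 5 :=
          young41 _ _ (by positivity) (by positivity)
  have key2 : B2 ≤ (3 * (lam' * B0) + 2 * (μ' * B5)) / 5 := by
    apply pow5_le _ _ h2 (by positivity)
    calc B2 ^ 5 ≤ B0 ^ 3 * B5 ^ 2 := h25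
      _ ≤ (lam' ^ 3 * μ' ^ 2) * (B0 ^ 3 * B5 ^ 2) := by
          nlinarith [hlm', mul_nonneg (pow_nonneg h0 3) (sq_nonneg B5)]
      _ = (lam' * B0) ^ 3 * (μ' * B5) ^ 2 := by ring
      _ ≤ ((3 * (lam' * B0) + 2 * (μ' * B5)) / 5) ^ 5 :=
          young32 _ _ (by positivity) (by positivity)
  have hμε : 3 * μ + 2 * μ' = 5 * ε := by rw [hμdef, hμ'def]; ring
  nlinarith [key1, key2, hμε, mul_nonneg h5 hμ.le, mul_nonneg h5 hμ'.le]

lemma D0_eq (h : ℝ) (z : ℤ → ℝ) (i : ℤ) : D0 h z i = (Dp h z i + Dm h z i) / 2 := by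
  simp only [D0, Dp, Dm]
  rw [← add_div, div_div, mul_comm h 2]
  congr 1
  ring

lemma nh2_Dm (N : ℕ) (hN : 1 ≤ N) (h : ℝ) (z : ℤ → ℝ) (hz : PeriodicGrid N z) :
    nh2 N h (Dm h z) = nh2 N h (Dp h z) := by
  rw [Dm_eq_shift]
  have e : (fun i => Dp h z (i - 1)) = (fun i => Dp h z (i + (-1))) := by
    funext i; rw [sub_eq_add_neg]
  rw [e, nh2_shift N hN h _ (periodic_Dp N h z hz) (-1)]

lemma nh2_D0_le (N : ℕ) (hN : 1 ≤ N) (h : ℝ) (hh : 0 ≤ h) (z : ℤ → ℝ) (hz : PeriodicGrid N z) :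
    nh2 N h (D0 h z) ≤ nh2 N h (Dp h z) := by
  have pb : ∀ i, (D0 h z i) ^ 2 ≤ ((Dp h z i) ^ 2 + (Dm h z i) ^ 2) / 2 := by
    intro i; rw [D0_eq]
    nlinarith [sq_nonneg (Dp h z i - Dm h z i)]
  have hs : ∑ i ∈ Finset.Icc (1:ℤ) (N:ℤ), (D0 h z i) ^ 2
      ≤ ((∑ i ∈ Finset.Icc (1:ℤ) (N:ℤ), (Dp h z i) ^ 2)
        + ∑ i ∈ Finset.Icc (1:ℤ) (N:ℤ), (Dm h z i) ^ 2) / 2 := by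
    rw [← Finset.sum_add_distrib, Finset.sum_div]
    exact Finset.sum_le_sum fun i _ => pb i
  have step := mul_le_mul_of_nonneg_left hs hh
  have e2 : nh2 N h (Dm h z) = nh2 N h (Dp h z) := nh2_Dm N hN h z hz
  unfold nh2 at e2 ⊢
  nlinarith [step, e2]

lemma Dp_D0_comm (h : ℝ) (z : ℤ → ℝ) : Dp h (D0 h z) = D0 h (Dp h z) := by
  funext i
  simp only [Dp, D0]
  rw [show i + 1 - 1 = i by ring, show i - 1 + 1 = i by ring]
  rw [div_sub_div_same, div_sub_div_same, div_div, div_div]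
  rw [show 2 * h * h = h * (2 * h) by ring]
  congr 1
  ring

lemma DmDm (h : ℝ) (z : ℤ → ℝ) :
    Dm h (Dm h z) = fun i => Dp h (Dp h z) (i + -2) := by
  funext i
  simp only [Dm, Dp]
  rw [show i + -2 + 1 + 1 = i by ring, show i + -2 + 1 = i - 1 by ring,
      show i + -2 = i - 2 by ring, show i - 1 - 1 = i - 2 by ring]


/-- Paper's Remark 2, estimate (2.7): for every `ε > 0` there is a constant `c(ε) > 0`,
independent of `N` and of the grid function, such that for every `N ≥ 1` and every periodic
grid function `z`, `max_{1 ≤ i ≤ N} |(D₀z)_i|² ≤ ε ‖D₊³D₋²z‖_h² + c(ε) ‖z‖_h²`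
(with `Δx = 1/N`). -/
theorem discrete_max_D0_interpolation (ε : ℝ) (hε : 0 < ε) :
    ∃ c > 0, ∀ N : ℕ, 1 ≤ N → ∀ z : ℤ → ℝ, PeriodicGrid N z →
      ∀ i ∈ Finset.Icc (1 : ℤ) (N : ℤ),
        (D0 (1 / N) z i) ^ 2
          ≤ ε * nh2 N (1 / N) (Dp (1/N) (Dp (1/N) (Dp (1/N) (Dm (1/N) (Dm (1/N) z)))))
            + c * nh2 N (1 / N) z := by
  obtain ⟨c, hc, harith⟩ := arith ε hε
  refine ⟨c, hc, ?_⟩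
  intro N hN z hz i hi
  have hN1 : (1:ℝ) ≤ (N:ℝ) := by exact_mod_cast hN
  set h : ℝ := 1 / (N:ℝ) with hhdef
  have hh : 0 < h := by rw [hhdef]; positivity
  have hNh : (N:ℝ) * h = 1 := by
    rw [hhdef]; field_simp
  have hz1 := periodic_Dp N h z hz
  have hz2 := periodic_Dp N h _ hz1
  have hz3 := periodic_Dp N h _ hz2
  have hz4 := periodic_Dp N h _ hz3
  have hz5 := periodic_Dp N h _ hz4
  have c1 := cs_step N hN h hh z hz
  have c2 := cs_step N hN h hh _ hz1
  have c3 := cs_step N hN h hh _ hz2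
  have c4 := cs_step N hN h hh _ hz3
  have hag := agmon N hN h hh hNh (D0 h z) (periodic_D0 N h z hz) i hi
  have hb1 := nh2_D0_le N hN h hh.le z hz
  have hb2 : nh2 N h (Dp h (D0 h z)) ≤ nh2 N h (Dp h (Dp h z)) := by
    rw [Dp_D0_comm]
    exact nh2_D0_le N hN h hh.le _ hz1
  have hB5 : nh2 N h (Dp h (Dp h (Dp h (Dm h (Dm h z)))))
      = nh2 N h (Dp h (Dp h (Dp h (Dp h (Dp h z))))) := by
    rw [DmDm, Dp_shift, Dp_shift, Dp_shift, nh2_shift N hN h _ hz5 (-2)]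
  have n0 := nh2_nonneg N h hh.le z
  have n1 := nh2_nonneg N h hh.le (Dp h z)
  have n2 := nh2_nonneg N h hh.le (Dp h (Dp h z))
  have n3 := nh2_nonneg N h hh.le (Dp h (Dp h (Dp h z)))
  have n4 := nh2_nonneg N h hh.le (Dp h (Dp h (Dp h (Dp h z))))
  have n5 := nh2_nonneg N h hh.le (Dp h (Dp h (Dp h (Dp h (Dp h z)))))
  have key := harith (nh2 N h z) (nh2 N h (Dp h z)) (nh2 N h (Dp h (Dp h z)))
    (nh2 N h (Dp h (Dp h (Dp h z)))) (nh2 N h (Dp h (Dp h (Dp h (Dp h z)))))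
    (nh2 N h (Dp h (Dp h (Dp h (Dp h (Dp h z))))))
    n0 n1 n2 n3 n4 n5 c1 c2 c3 c4
  rw [hB5]
  calc (D0 h z i) ^ 2
      ≤ 3 * nh2 N h (D0 h z) + nh2 N h (Dp h (D0 h z)) := hag
    _ ≤ 3 * nh2 N h (Dp h z) + nh2 N h (Dp h (Dp h z)) := by linarith
    _ ≤ ε * nh2 N h (Dp h (Dp h (Dp h (Dp h (Dp h z)))))
        + c * nh2 N h z := key
end

section
/- For every integer N ≥ 1 and every periodic grid function u one has the summation-by-parts identity (u, D₋D₊²u)_h = (Δx/2) ‖D₊D₋u‖_h². -/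
/-- Shifting the index by one does not change the sum of a function over a period. -/
lemma shift_sum (N : ℕ) (hN : 1 ≤ N) (f : ℤ → ℝ) (hf : f (1 + (N:ℤ)) = f 1) :
    ∑ i ∈ Finset.Icc (1:ℤ) (N:ℤ), f (i+1) = ∑ i ∈ Finset.Icc (1:ℤ) (N:ℤ), f i := by
  have h1 : ∑ i ∈ Finset.Icc (1:ℤ) (N:ℤ), f (i+1)
      = ∑ i ∈ Finset.Icc (2:ℤ) ((N:ℤ)+1), f i := by
    rw [show Finset.Icc (2:ℤ) ((N:ℤ)+1)
        = Finset.map (addRightEmbedding 1) (Finset.Icc (1:ℤ) (N:ℤ)) by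
      rw [Finset.map_add_right_Icc]; norm_num]
    rw [Finset.sum_map]
    rfl
  have hN' : (1:ℤ) ≤ (N:ℤ) := by exact_mod_cast hN
  have e1 : Finset.Icc (2:ℤ) ((N:ℤ)+1) = insert ((N:ℤ)+1) (Finset.Icc (2:ℤ) (N:ℤ)) := by
    ext i; simp [Finset.mem_Icc]; omega
  have e2 : Finset.Icc (1:ℤ) (N:ℤ) = insert (1:ℤ) (Finset.Icc (2:ℤ) (N:ℤ)) := by
    ext i; simp [Finset.mem_Icc]; omega
  have m1 : ((N:ℤ)+1) ∉ Finset.Icc (2:ℤ) (N:ℤ) := by simp [Finset.mem_Icc]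
  have m2 : (1:ℤ) ∉ Finset.Icc (2:ℤ) (N:ℤ) := by simp [Finset.mem_Icc]
  rw [h1, e1, Finset.sum_insert m1]
  conv_rhs => rw [e2, Finset.sum_insert m2]
  rw [show (N:ℤ)+1 = 1 + (N:ℤ) by ring, hf]

/-- Paper's identity (2.12): for every `N ≥ 1` and every periodic grid function `u`,
`(u, D₋D₊²u)_h = (Δx/2) ‖D₊D₋u‖_h²` with `Δx = 1/N`. -/
theorem summation_by_parts_airy (N : ℕ) (hN : 1 ≤ N) (Δx : ℝ) (hΔx : Δx = 1 / N)
    (u : ℤ → ℝ) (hu : PeriodicGrid N u) :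
    iph N Δx u (Dm Δx (Dp Δx (Dp Δx u))) = (Δx / 2) * nh2 N Δx (Dp Δx (Dm Δx u)) := by
  set I := Finset.Icc (1:ℤ) (N:ℤ) with hI
  -- shift identities
  have s1 : ∑ i ∈ I, u (i+1)^2 = ∑ i ∈ I, u i^2 := by
    have := shift_sum N hN (fun i => u i ^ 2) (by rw [hu 1])
    simpa using this
  have s2 : ∑ i ∈ I, u i ^ 2 = ∑ i ∈ I, u (i-1)^2 := by
    have := shift_sum N hN (fun i => u (i-1) ^ 2)
      (by rw [show (1:ℤ)+(N:ℤ)-1 = (1-1)+(N:ℤ) by ring, hu])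
    rw [← this]
    exact Finset.sum_congr rfl fun i _ => by rw [show i+1-1 = i by ring]
  have s3 : ∑ i ∈ I, u i * u (i+1) = ∑ i ∈ I, u (i-1) * u i := by
    have := shift_sum N hN (fun i => u (i-1) * u i)
      (by rw [show (1:ℤ)+(N:ℤ)-1 = (1-1)+(N:ℤ) by ring, hu, hu 1])
    rw [← this]
    exact Finset.sum_congr rfl fun i _ => by rw [show i+1-1 = i by ring]
  have s4 : ∑ i ∈ I, u i * u (i+2) = ∑ i ∈ I, u (i-1) * u (i+1) := by
    have := shift_sum N hN (fun i => u (i-1) * u (i+1))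
      (by
          rw [show (1:ℤ)+(N:ℤ)-1 = (1-1)+(N:ℤ) by ring, hu,
              show (1:ℤ)+(N:ℤ)+1 = (1+1)+(N:ℤ) by ring, hu])
    rw [← this]
    exact Finset.sum_congr rfl fun i _ =>
      by rw [show i+1-1 = i by ring, show i+1+1 = i+2 by ring]
  -- the key discrete identity
  have key : ∑ i ∈ I, u i * (u (i+2) - 3*u (i+1) + 3*u i - u (i-1))
      = (1/2) * ∑ i ∈ I, (u (i+1) - 2*u i + u (i-1))^2 := by
    have hL : ∑ i ∈ I, u i * (u (i+2) - 3*u (i+1) + 3*u i - u (i-1))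
        = (∑ i ∈ I, u i * u (i+2)) - 3*(∑ i ∈ I, u i * u (i+1))
          + 3*(∑ i ∈ I, u i ^ 2) - (∑ i ∈ I, u (i-1) * u i) := by
      rw [show (∑ i ∈ I, u i * u (i+2)) - 3*(∑ i ∈ I, u i * u (i+1))
          + 3*(∑ i ∈ I, u i ^ 2) - (∑ i ∈ I, u (i-1) * u i)
        = ∑ i ∈ I, (u i * u (i+2) - 3*(u i * u (i+1)) + 3*(u i ^ 2) - u (i-1) * u i) by
          simp only [Finset.sum_sub_distrib, Finset.sum_add_distrib, Finset.mul_sum]]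
      exact Finset.sum_congr rfl fun i _ => by ring
    have hR : ∑ i ∈ I, (u (i+1) - 2*u i + u (i-1))^2
        = (∑ i ∈ I, u (i+1)^2) + 4*(∑ i ∈ I, u i ^ 2) + (∑ i ∈ I, u (i-1)^2)
          - 4*(∑ i ∈ I, u i * u (i+1)) + 2*(∑ i ∈ I, u (i-1) * u (i+1))
          - 4*(∑ i ∈ I, u (i-1) * u i) := by
      rw [show (∑ i ∈ I, u (i+1)^2) + 4*(∑ i ∈ I, u i ^ 2) + (∑ i ∈ I, u (i-1)^2)
          - 4*(∑ i ∈ I, u i * u (i+1)) + 2*(∑ i ∈ I, u (i-1) * u (i+1))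
          - 4*(∑ i ∈ I, u (i-1) * u i)
        = ∑ i ∈ I, (u (i+1)^2 + 4*(u i ^2) + u (i-1)^2 - 4*(u i * u (i+1))
            + 2*(u (i-1) * u (i+1)) - 4*(u (i-1) * u i)) by
          simp only [Finset.sum_sub_distrib, Finset.sum_add_distrib, Finset.mul_sum]]
      exact Finset.sum_congr rfl fun i _ => by ring
    rw [hL, hR]
    linarith [s1, s2, s3, s4]
  -- arithmetic with Δx
  have hNpos : (1:ℝ) ≤ (N:ℝ) := by exact_mod_cast hN
  have hne : Δx ≠ 0 := by
    rw [hΔx]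
    positivity
  rw [iph, nh2, ← hI]
  have eL : ∑ i ∈ I, u i * Dm Δx (Dp Δx (Dp Δx u)) i
      = (∑ i ∈ I, u i * (u (i+2) - 3*u (i+1) + 3*u i - u (i-1))) / Δx^3 := by
    rw [Finset.sum_div]
    refine Finset.sum_congr rfl fun i _ => ?_
    simp only [Dm, Dp]
    rw [show i-1+1+1 = i+1 by ring, show i-1+1 = i by ring, show i+1+1 = i+2 by ring]
    field_simp
    ring
  have eR : ∑ i ∈ I, (Dp Δx (Dm Δx u) i)^2
      = (∑ i ∈ I, (u (i+1) - 2*u i + u (i-1))^2) / Δx^4 := by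
    rw [Finset.sum_div]
    refine Finset.sum_congr rfl fun i _ => ?_
    simp only [Dm, Dp]
    rw [show i+1-1 = i by ring]
    field_simp
    ring
  rw [eL, eR, key]
  field_simp
end
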